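/- Let R_1,…,R_k be pairwise commuting reflections on Y, V : X → Y an isometry, ρ a density operator on X⊗Z, and set Ř_i = V* R_i V. If each Ř_i has an ε-consistent reflection on Z with respect to ρ (i.e., there exist reflections S_i on Z with Tr((Ř_i ⊗ S_i)ρ) ≥ 1 − ε), then Re Tr([V*(Π_{i=1}^k R_i)V · Π_{i=1}^k Ř_i] ρ) ≥ 1 − O(ε), where the constant in O depends only on k. -/

import Mathlib

open Matrix Kronecker ComplexOrder

namespace PPC

set_option linter.unusedSectionVars false

open scoped MatrixOrder in
lemma psd_decomp {n : Type*} [Fintype n] [DecidableEq n] {A : Matrix n n ℂ}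
    (h : A.PosSemidef) : ∃ B : Matrix n n ℂ, A = Bᴴ * B := by
  obtain ⟨B, hB⟩ := CStarAlgebra.nonneg_iff_eq_star_mul_self.mp h.nonneg
  exact ⟨B, hB⟩

open scoped MatrixOrder in
lemma psd_sqrt {n : Type*} [Fintype n] [DecidableEq n] (ρ : Matrix n n ℂ)
    (h : ρ.PosSemidef) : ∃ s : Matrix n n ℂ, sᴴ = s ∧ s * s = ρ :=
  ⟨CFC.sqrt ρ, (nonneg_iff_posSemidef.mp (CFC.sqrt_nonneg ρ)).isHermitian.eq,
    CFC.sqrt_mul_sqrt_self ρ h.nonneg⟩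

variable {m n p q : Type*} [Fintype m] [Fintype n] [Fintype p] [Fintype q]

noncomputable def vec (A : Matrix m n ℂ) : EuclideanSpace ℂ (m × n) := WithLp.toLp 2 (fun x : m × n => A x.1 x.2)

lemma inner_vec (A B : Matrix m n ℂ) :
    (inner ℂ (vec A) (vec B) : ℂ) = (Aᴴ * B).trace := by
  simp only [EuclideanSpace, PiLp.inner_apply, vec, RCLike.inner_apply]
  rw [Matrix.trace]
  simp only [Matrix.diag, Matrix.mul_apply, conjTranspose_apply]
  rw [Fintype.sum_prod_type]
  rw [Finset.sum_comm]
  exact Finset.sum_congr rfl fun _ _ => Finset.sum_congr rfl fun _ _ => mul_comm _ _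

lemma kron_conjT (A : Matrix m n ℂ) (B : Matrix p q ℂ) : (A ⊗ₖ B)ᴴ = Aᴴ ⊗ₖ Bᴴ := by
  ext ⟨i,j⟩ ⟨a,b⟩
  simp only [conjTranspose_apply, kroneckerMap_apply, star_mul']

lemma kron_sub (C : Matrix m n ℂ) (A B : Matrix p q ℂ) :
    C ⊗ₖ (A - B) = C ⊗ₖ A - C ⊗ₖ B := by
  ext ⟨i,j⟩ ⟨a,b⟩
  simp only [kroneckerMap_apply, Matrix.sub_apply, mul_sub]

lemma sub_kron (A B : Matrix m n ℂ) (C : Matrix p q ℂ) :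
    (A - B) ⊗ₖ C = A ⊗ₖ C - B ⊗ₖ C := by
  ext ⟨i,j⟩ ⟨a,b⟩
  simp only [kroneckerMap_apply, Matrix.sub_apply, sub_mul]

end PPC

namespace PPC

variable {m m' N : Type*} [Fintype m] [Fintype m'] [Fintype N] [DecidableEq m] [DecidableEq m'] [DecidableEq N]

set_option linter.unusedSectionVars false

noncomputable def psi (s : Matrix N N ℂ) (K : Matrix m N ℂ) : EuclideanSpace ℂ (m × N) :=
  vec (K * s)

lemma psi_sub (s : Matrix N N ℂ) (K₁ K₂ : Matrix m N ℂ) :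
    psi s (K₁ - K₂) = psi s K₁ - psi s K₂ := by
  ext x
  simp [psi, vec, Matrix.sub_mul]

lemma inner_psi (s : Matrix N N ℂ) (hs : sᴴ = s) (K₁ K₂ : Matrix m N ℂ) :
    (inner ℂ (psi s K₁) (psi s K₂) : ℂ) = (K₁ᴴ * K₂ * (s * s)).trace := by
  rw [psi, psi, inner_vec, conjTranspose_mul]
  rw [show sᴴ * K₁ᴴ * (K₂ * s) = sᴴ * (K₁ᴴ * K₂ * s) by
    simp [Matrix.mul_assoc]]
  rw [Matrix.trace_mul_comm]
  simp [Matrix.mul_assoc, hs]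

lemma norm_psi_sq (s : Matrix N N ℂ) (hs : sᴴ = s) (K : Matrix m N ℂ) :
    ‖psi s K‖ ^ 2 = ((Kᴴ * K * (s * s)).trace).re := by
  rw [← inner_self_eq_norm_sq (𝕜 := ℂ), inner_psi s hs]; rfl

lemma trace_psi_nonneg (s : Matrix N N ℂ) (hs : sᴴ = s) (K : Matrix m N ℂ) :
    0 ≤ ((Kᴴ * K * (s * s)).trace).re := by
  rw [← norm_psi_sq s hs]; positivity

lemma norm_psi_mul_le (s : Matrix N N ℂ) (hs : sᴴ = s) (M : Matrix m' m ℂ)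
    (h : (1 - Mᴴ * M).PosSemidef) (K : Matrix m N ℂ) :
    ‖psi s (M * K)‖ ≤ ‖psi s (K)‖ := by
  obtain ⟨B, hB⟩ := psd_decomp h
  have key : ‖psi s (M * K)‖ ^ 2 ≤ ‖psi s K‖ ^ 2 := by
    rw [norm_psi_sq s hs, norm_psi_sq s hs]
    have expand : Kᴴ * K = (M * K)ᴴ * (M * K) + (B * K)ᴴ * (B * K) := by
      have h1 : (M * K)ᴴ * (M * K) = Kᴴ * (Mᴴ * M) * K := by
        simp [conjTranspose_mul, Matrix.mul_assoc]
      have h2 : (B * K)ᴴ * (B * K) = Kᴴ * (Bᴴ * B) * K := by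
        simp [conjTranspose_mul, Matrix.mul_assoc]
      rw [h1, h2, ← hB]
      simp [Matrix.sub_mul, Matrix.mul_sub, Matrix.mul_assoc]
    rw [expand, Matrix.add_mul, Matrix.trace_add]
    have := trace_psi_nonneg s hs (B * K)
    simp only [Complex.add_re]
    linarith
  calc ‖psi s (M * K)‖ = Real.sqrt (‖psi s (M * K)‖ ^ 2) := by
        rw [Real.sqrt_sq (norm_nonneg _)]
    _ ≤ Real.sqrt (‖psi s K‖ ^ 2) := Real.sqrt_le_sqrt key
    _ = ‖psi s K‖ := Real.sqrt_sq (norm_nonneg _)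

end PPC

namespace PPC

section Tools

variable {a b c z : Type*} [Fintype a] [Fintype b] [Fintype c] [Fintype z]
  [DecidableEq a] [DecidableEq b] [DecidableEq c] [DecidableEq z]

set_option linter.unusedSectionVars false

/-- `M` is a contraction: `MᴴM ≤ 1`. -/
def IsContr (M : Matrix a b ℂ) : Prop := (1 - Mᴴ * M).PosSemidef

lemma isContr_of_unitary {M : Matrix a b ℂ} (h : Mᴴ * M = 1) : IsContr M := by
  unfold IsContr; rw [h, sub_self]; exact Matrix.PosSemidef.zero

lemma isContr_of_eq {M : Matrix a b ℂ} (C : Matrix c b ℂ) (h : 1 - Mᴴ * M = Cᴴ * C) :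
    IsContr M := by
  unfold IsContr; rw [h]; exact Matrix.posSemidef_conjTranspose_mul_self C

lemma IsContr.mul {M : Matrix a b ℂ} {K : Matrix b c ℂ} (hM : IsContr M) (hK : IsContr K) :
    IsContr (M * K) := by
  unfold IsContr at *
  have key : 1 - (M * K)ᴴ * (M * K) = Kᴴ * (1 - Mᴴ * M) * K + (1 - Kᴴ * K) := by
    simp only [conjTranspose_mul, Matrix.mul_sub, Matrix.sub_mul, Matrix.mul_one,
      Matrix.one_mul, Matrix.mul_assoc]
    abel
  rw [key]
  exact (hM.conjTranspose_mul_mul_same K).add hK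

lemma IsContr.kron_one {M : Matrix a b ℂ} (hM : IsContr M) :
    IsContr (M ⊗ₖ (1 : Matrix z z ℂ)) := by
  obtain ⟨B, hB⟩ := psd_decomp hM
  apply isContr_of_eq (B ⊗ₖ (1 : Matrix z z ℂ))
  rw [kron_conjT, ← mul_kronecker_mul, kron_conjT, ← mul_kronecker_mul, conjTranspose_one,
    Matrix.one_mul, ← hB, sub_kron, Matrix.one_kronecker_one]

lemma IsContr.one_kron {M : Matrix a b ℂ} (hM : IsContr M) :
    IsContr ((1 : Matrix z z ℂ) ⊗ₖ M) := by
  obtain ⟨B, hB⟩ := psd_decomp hM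
  apply isContr_of_eq ((1 : Matrix z z ℂ) ⊗ₖ B)
  rw [kron_conjT, ← mul_kronecker_mul, kron_conjT, ← mul_kronecker_mul, conjTranspose_one,
    Matrix.one_mul, ← hB, kron_sub, Matrix.one_kronecker_one]

end Tools

end PPC

namespace PPC

section Main

variable {x y z : Type*} [Fintype x] [Fintype y] [Fintype z]
  [DecidableEq x] [DecidableEq y] [DecidableEq z]

set_option linter.unusedSectionVars false

variable (V : Matrix y x ℂ) (s : Matrix (x × z) (x × z) ℂ) (ε : ℝ)

/-- All the hypotheses on one reflection pair. -/
def Good (p : Matrix y y ℂ × Matrix z z ℂ) : Prop :=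
  p.1.IsHermitian ∧ p.1 * p.1 = 1 ∧ p.2.IsHermitian ∧ p.2 * p.2 = 1 ∧
    1 - ε ≤ ((((Vᴴ * p.1 * V) ⊗ₖ p.2) * (s * s)).trace).re

/-- cross-term expansion of `‖ψ (K₁ - K₂)‖²`. -/
lemma psi_cross {m : Type*} [Fintype m] [DecidableEq m] (hs : sᴴ = s)
    (K₁ K₂ : Matrix m (x × z) ℂ) :
    ‖psi s (K₁ - K₂)‖ ^ 2 =
      ((K₁ᴴ * K₁ * (s * s)).trace).re + ((K₂ᴴ * K₂ * (s * s)).trace).re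
        - ((K₁ᴴ * K₂ * (s * s)).trace).re - ((K₂ᴴ * K₁ * (s * s)).trace).re := by
  rw [norm_psi_sq s hs]
  simp only [conjTranspose_sub, Matrix.sub_mul, Matrix.mul_sub, Matrix.trace_sub,
    Complex.sub_re]
  ring

lemma hermQ (hV : Vᴴ * V = 1) : (1 - V * Vᴴ)ᴴ * (1 - V * Vᴴ) = 1 - V * Vᴴ := by
  rw [conjTranspose_sub, conjTranspose_one, conjTranspose_mul, conjTranspose_conjTranspose]
  rw [Matrix.sub_mul, Matrix.mul_sub, Matrix.mul_sub, Matrix.one_mul, Matrix.mul_one]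
  rw [show V * Vᴴ * (V * Vᴴ) = V * (Vᴴ * V) * Vᴴ from by simp [Matrix.mul_assoc], hV,
    Matrix.mul_one]
  simp

lemma isContr_V (hV : Vᴴ * V = 1) : IsContr V := isContr_of_unitary hV

lemma isContr_Vh (hV : Vᴴ * V = 1) : IsContr Vᴴ := by
  apply isContr_of_eq (1 - V * Vᴴ)
  rw [conjTranspose_conjTranspose, hermQ V hV]

lemma isContr_Q (hV : Vᴴ * V = 1) : IsContr (1 - V * Vᴴ) := by
  apply isContr_of_eq Vᴴ
  rw [hermQ V hV, conjTranspose_conjTranspose, sub_sub_cancel]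

lemma isContr_Rh (hV : Vᴴ * V = 1) {p : Matrix y y ℂ × Matrix z z ℂ}
    (hR : p.1.IsHermitian) (hR2 : p.1 * p.1 = 1) : IsContr (Vᴴ * p.1 * V) :=
  ((isContr_Vh V hV).mul (isContr_of_unitary (by rw [hR.eq, hR2]))).mul (isContr_V V hV)

lemma hermRh (A : Matrix y y ℂ) (hA : Aᴴ = A) :
    (Vᴴ * A * V)ᴴ = Vᴴ * A * V := by
  rw [conjTranspose_mul, conjTranspose_mul, conjTranspose_conjTranspose, hA,
    Matrix.mul_assoc]

lemma trace_kron_sub_one (htr : (s * s).trace = 1) (A : Matrix x x ℂ) :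
    ((((1 - A) ⊗ₖ (1 : Matrix z z ℂ)) * (s * s)).trace).re =
      1 - (((A ⊗ₖ (1 : Matrix z z ℂ)) * (s * s)).trace).re := by
  rw [sub_kron, Matrix.one_kronecker_one, Matrix.sub_mul, Matrix.trace_sub, Matrix.one_mul, htr]
  simp

lemma atomic1 (hV : Vᴴ * V = 1) (hs : sᴴ = s) (htr : (s * s).trace = 1)
    {p : Matrix y y ℂ × Matrix z z ℂ} (hp : Good V s ε p) :
    ‖psi s ((p.1 * V) ⊗ₖ (1 : Matrix z z ℂ) - V ⊗ₖ p.2)‖ ^ 2 ≤ 2 * ε := by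
  obtain ⟨hR, hR2, hS, hS2, hcons⟩ := hp
  have hRV : (p.1 * V)ᴴ * (p.1 * V) = 1 := by
    rw [conjTranspose_mul, hR.eq, Matrix.mul_assoc Vᴴ p.1 (p.1 * V),
      ← Matrix.mul_assoc p.1 p.1 V, hR2, Matrix.one_mul, hV]
  have e1 : ((p.1 * V) ⊗ₖ (1 : Matrix z z ℂ))ᴴ * ((p.1 * V) ⊗ₖ (1 : Matrix z z ℂ)) = 1 := by
    rw [kron_conjT, ← mul_kronecker_mul, hRV, conjTranspose_one, Matrix.one_mul,
      Matrix.one_kronecker_one]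
  have e2 : (V ⊗ₖ p.2)ᴴ * (V ⊗ₖ p.2) = 1 := by
    rw [kron_conjT, ← mul_kronecker_mul, hV, hS.eq, hS2, Matrix.one_kronecker_one]
  have e3 : ((p.1 * V) ⊗ₖ (1 : Matrix z z ℂ))ᴴ * (V ⊗ₖ p.2) = (Vᴴ * p.1 * V) ⊗ₖ p.2 := by
    rw [kron_conjT, ← mul_kronecker_mul, conjTranspose_mul, hR.eq, conjTranspose_one,
      Matrix.one_mul]
  have e4 : (V ⊗ₖ p.2)ᴴ * ((p.1 * V) ⊗ₖ (1 : Matrix z z ℂ)) = (Vᴴ * p.1 * V) ⊗ₖ p.2 := by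
    rw [kron_conjT, ← mul_kronecker_mul, hS.eq, Matrix.mul_one, ← Matrix.mul_assoc]
  rw [psi_cross s hs, e1, e2, e3, e4, Matrix.one_mul, htr]
  simp only [Complex.one_re]
  linarith

lemma atomic2_eq (hV : Vᴴ * V = 1) (hs : sᴴ = s) (htr : (s * s).trace = 1)
    {p : Matrix y y ℂ × Matrix z z ℂ} (hR : p.1.IsHermitian) (hS : p.2.IsHermitian)
    (hS2 : p.2 * p.2 = 1) :
    ‖psi s ((Vᴴ * p.1 * V) ⊗ₖ (1 : Matrix z z ℂ) - (1 : Matrix x x ℂ) ⊗ₖ p.2)‖ ^ 2 =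
      ((((Vᴴ * p.1 * V * (Vᴴ * p.1 * V)) ⊗ₖ (1 : Matrix z z ℂ)) * (s * s)).trace).re + 1
        - 2 * ((((Vᴴ * p.1 * V) ⊗ₖ p.2) * (s * s)).trace).re := by
  have hRh := hermRh V p.1 hR.eq
  have e1 : ((Vᴴ * p.1 * V) ⊗ₖ (1 : Matrix z z ℂ))ᴴ * ((Vᴴ * p.1 * V) ⊗ₖ (1 : Matrix z z ℂ)) =
      (Vᴴ * p.1 * V * (Vᴴ * p.1 * V)) ⊗ₖ (1 : Matrix z z ℂ) := by
    rw [kron_conjT, ← mul_kronecker_mul, hRh, conjTranspose_one, Matrix.one_mul]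
  have e2 : ((1 : Matrix x x ℂ) ⊗ₖ p.2)ᴴ * ((1 : Matrix x x ℂ) ⊗ₖ p.2) = 1 := by
    rw [kron_conjT, ← mul_kronecker_mul, conjTranspose_one, Matrix.one_mul, hS.eq, hS2,
      Matrix.one_kronecker_one]
  have e3 : ((Vᴴ * p.1 * V) ⊗ₖ (1 : Matrix z z ℂ))ᴴ * ((1 : Matrix x x ℂ) ⊗ₖ p.2) =
      (Vᴴ * p.1 * V) ⊗ₖ p.2 := by
    rw [kron_conjT, ← mul_kronecker_mul, hRh, conjTranspose_one, Matrix.one_mul,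
      Matrix.mul_one]
  have e4 : ((1 : Matrix x x ℂ) ⊗ₖ p.2)ᴴ * ((Vᴴ * p.1 * V) ⊗ₖ (1 : Matrix z z ℂ)) =
      (Vᴴ * p.1 * V) ⊗ₖ p.2 := by
    rw [kron_conjT, ← mul_kronecker_mul, conjTranspose_one, Matrix.one_mul, hS.eq,
      Matrix.mul_one]
  rw [psi_cross s hs, e1, e2, e3, e4, Matrix.one_mul, htr]
  simp only [Complex.one_re]
  ring

lemma trace_RhRh_le_one (hV : Vᴴ * V = 1) (hs : sᴴ = s) (htr : (s * s).trace = 1)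
    {p : Matrix y y ℂ × Matrix z z ℂ} (hR : p.1.IsHermitian) (hR2 : p.1 * p.1 = 1) :
    ((((Vᴴ * p.1 * V * (Vᴴ * p.1 * V)) ⊗ₖ (1 : Matrix z z ℂ)) * (s * s)).trace).re ≤ 1 := by
  have hcontr : (1 - Vᴴ * p.1 * V * (Vᴴ * p.1 * V)).PosSemidef := by
    have h := isContr_Rh V hV hR hR2
    unfold IsContr at h
    rwa [hermRh V p.1 hR.eq] at h
  obtain ⟨B, hB⟩ := psd_decomp hcontr
  have key : ((1 - Vᴴ * p.1 * V * (Vᴴ * p.1 * V)) ⊗ₖ (1 : Matrix z z ℂ)) =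
      (B ⊗ₖ (1 : Matrix z z ℂ))ᴴ * (B ⊗ₖ (1 : Matrix z z ℂ)) := by
    rw [kron_conjT, ← mul_kronecker_mul, ← hB, conjTranspose_one, Matrix.one_mul]
  have hpos := trace_psi_nonneg s hs (B ⊗ₖ (1 : Matrix z z ℂ))
  rw [← key, trace_kron_sub_one s htr] at hpos
  linarith

lemma atomic2 (hV : Vᴴ * V = 1) (hs : sᴴ = s) (htr : (s * s).trace = 1)
    {p : Matrix y y ℂ × Matrix z z ℂ} (hp : Good V s ε p) :
    ‖psi s ((Vᴴ * p.1 * V) ⊗ₖ (1 : Matrix z z ℂ) - (1 : Matrix x x ℂ) ⊗ₖ p.2)‖ ^ 2 ≤ 2 * ε := by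
  obtain ⟨hR, hR2, hS, hS2, hcons⟩ := hp
  rw [atomic2_eq V s hV hs htr hR hS hS2]
  have := trace_RhRh_le_one V s hV hs htr hR hR2
  linarith

lemma atomicB (hV : Vᴴ * V = 1) (hs : sᴴ = s) (htr : (s * s).trace = 1)
    {p : Matrix y y ℂ × Matrix z z ℂ} (hp : Good V s ε p) :
    ((((1 - Vᴴ * p.1 * V * (Vᴴ * p.1 * V)) ⊗ₖ (1 : Matrix z z ℂ)) * (s * s)).trace).re
      ≤ 2 * ε := by
  obtain ⟨hR, hR2, hS, hS2, hcons⟩ := hp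
  have h0 : (0:ℝ) ≤ ‖psi s ((Vᴴ * p.1 * V) ⊗ₖ (1 : Matrix z z ℂ) - (1 : Matrix x x ℂ) ⊗ₖ p.2)‖ ^ 2 := by
    positivity
  rw [atomic2_eq V s hV hs htr hR hS hS2] at h0
  rw [trace_kron_sub_one s htr]
  linarith

lemma psi_add {m : Type*} [Fintype m] (K₁ K₂ : Matrix m (x × z) ℂ) :
    psi s (K₁ + K₂) = psi s K₁ + psi s K₂ := by
  ext w
  simp [psi, vec, Matrix.add_mul]

lemma psi_zero {m : Type*} [Fintype m] : psi s (0 : Matrix m (x × z) ℂ) = 0 := by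
  ext w
  simp [psi, vec]

lemma norm_psi_le_sqrt {m : Type*} [Fintype m] [DecidableEq m] {K : Matrix m (x × z) ℂ}
    {c : ℝ} (h : ‖psi s K‖ ^ 2 ≤ c) : ‖psi s K‖ ≤ Real.sqrt c := by
  calc ‖psi s K‖ = Real.sqrt (‖psi s K‖ ^ 2) := (Real.sqrt_sq (norm_nonneg _)).symm
    _ ≤ Real.sqrt c := Real.sqrt_le_sqrt h

lemma prod_unitary {α : Type*} [Fintype α] [DecidableEq α] (l : List (Matrix α α ℂ))
    (h : ∀ A ∈ l, Aᴴ * A = 1) : (l.prod)ᴴ * l.prod = 1 := by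
  induction l with
  | nil => simp
  | cons a t ih =>
    rw [List.prod_cons, conjTranspose_mul, Matrix.mul_assoc,
      ← Matrix.mul_assoc aᴴ a t.prod, h a (List.mem_cons_self), Matrix.one_mul,
      ih fun A hA => h A (List.mem_cons_of_mem a hA)]

lemma prod_contr {α : Type*} [Fintype α] [DecidableEq α] (l : List (Matrix α α ℂ))
    (h : ∀ A ∈ l, IsContr A) : IsContr l.prod := by
  induction l with
  | nil => exact isContr_of_unitary (by simp)
  | cons a t ih =>
    rw [List.prod_cons]
    exact (h a (List.mem_cons_self)).mul (ih fun A hA => h A (List.mem_cons_of_mem a hA))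

lemma prod_herm {α : Type*} [Fintype α] [DecidableEq α] (l : List (Matrix α α ℂ))
    (hcomm : ∀ A ∈ l, ∀ B ∈ l, A * B = B * A) (hherm : ∀ A ∈ l, Aᴴ = A) :
    (l.prod)ᴴ = l.prod := by
  induction l with
  | nil => simp
  | cons a t ih =>
    rw [List.prod_cons, conjTranspose_mul, hherm a (List.mem_cons_self),
      ih (fun A hA B hB => hcomm A (List.mem_cons_of_mem a hA) B (List.mem_cons_of_mem a hB))
        (fun A hA => hherm A (List.mem_cons_of_mem a hA))]
    exact (Commute.list_prod_right t a fun b hb =>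
      (hcomm a (List.mem_cons_self) b (List.mem_cons_of_mem a hb))).symm

noncomputable def prodR (L : List (Matrix y y ℂ × Matrix z z ℂ)) : Matrix y y ℂ := (L.map Prod.fst).prod

noncomputable def prodRh (L : List (Matrix y y ℂ × Matrix z z ℂ)) : Matrix x x ℂ :=
  (L.map fun p => Vᴴ * p.1 * V).prod

noncomputable def prodS (L : List (Matrix y y ℂ × Matrix z z ℂ)) : Matrix z z ℂ :=
  ((L.map Prod.snd).reverse).prod

lemma prodR_cons (p : Matrix y y ℂ × Matrix z z ℂ) (L : List (Matrix y y ℂ × Matrix z z ℂ)) :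
    prodR (p :: L) = p.1 * prodR L := by
  simp [prodR]

lemma prodRh_cons (p : Matrix y y ℂ × Matrix z z ℂ) (L : List (Matrix y y ℂ × Matrix z z ℂ)) :
    prodRh V (p :: L) = (Vᴴ * p.1 * V) * prodRh V L := by
  simp [prodRh]

lemma prodS_cons (p : Matrix y y ℂ × Matrix z z ℂ) (L : List (Matrix y y ℂ × Matrix z z ℂ)) :
    prodS (p :: L) = prodS L * p.2 := by
  simp [prodS]

lemma prodS_unitary (L : List (Matrix y y ℂ × Matrix z z ℂ)) (hL : ∀ p ∈ L, Good V s ε p) :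
    (prodS L)ᴴ * prodS L = 1 := by
  apply prod_unitary
  intro A hA
  rw [List.mem_reverse, List.mem_map] at hA
  obtain ⟨p, hp, rfl⟩ := hA
  obtain ⟨_, _, hS, hS2, _⟩ := hL p hp
  rw [hS.eq, hS2]

lemma prodR_unitary (L : List (Matrix y y ℂ × Matrix z z ℂ)) (hL : ∀ p ∈ L, Good V s ε p) :
    (prodR L)ᴴ * prodR L = 1 := by
  apply prod_unitary
  intro A hA
  rw [List.mem_map] at hA
  obtain ⟨p, hp, rfl⟩ := hA
  obtain ⟨hR, hR2, _, _, _⟩ := hL p hp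
  rw [hR.eq, hR2]

lemma prodR_herm (L : List (Matrix y y ℂ × Matrix z z ℂ)) (hL : ∀ p ∈ L, Good V s ε p)
    (hcomm : ∀ p ∈ L, ∀ q ∈ L, p.1 * q.1 = q.1 * p.1) : (prodR L)ᴴ = prodR L := by
  apply prod_herm
  · intro A hA B hB
    rw [List.mem_map] at hA hB
    obtain ⟨p, hp, rfl⟩ := hA
    obtain ⟨q, hq, rfl⟩ := hB
    exact hcomm p hp q hq
  · intro A hA
    rw [List.mem_map] at hA
    obtain ⟨p, hp, rfl⟩ := hA
    exact (hL p hp).1.eq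

lemma lemD (hV : Vᴴ * V = 1) (hs : sᴴ = s) (htr : (s * s).trace = 1)
    (L : List (Matrix y y ℂ × Matrix z z ℂ)) (hL : ∀ p ∈ L, Good V s ε p) :
    ‖psi s ((prodR L * V) ⊗ₖ (1 : Matrix z z ℂ) - V ⊗ₖ prodS L)‖ ≤
      L.length * Real.sqrt (2 * ε) := by
  induction L with
  | nil =>
    have h0 : (prodR ([] : List (Matrix y y ℂ × Matrix z z ℂ)) * V) ⊗ₖ (1 : Matrix z z ℂ)
        - V ⊗ₖ prodS ([] : List (Matrix y y ℂ × Matrix z z ℂ)) = 0 := by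
      simp [prodR, prodS]
    rw [h0, psi_zero]
    simp
  | cons p L ih =>
    have key : (prodR (p :: L) * V) ⊗ₖ (1 : Matrix z z ℂ) - V ⊗ₖ prodS (p :: L) =
        (p.1 ⊗ₖ (1 : Matrix z z ℂ)) * ((prodR L * V) ⊗ₖ (1 : Matrix z z ℂ) - V ⊗ₖ prodS L)
          + ((1 : Matrix y y ℂ) ⊗ₖ prodS L) * ((p.1 * V) ⊗ₖ (1 : Matrix z z ℂ) - V ⊗ₖ p.2) := by
      rw [prodR_cons, prodS_cons, Matrix.mul_sub, Matrix.mul_sub,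
        ← mul_kronecker_mul, ← mul_kronecker_mul, ← mul_kronecker_mul, ← mul_kronecker_mul]
      simp only [Matrix.one_mul, Matrix.mul_one, Matrix.mul_assoc]
      abel
    rw [key, psi_add]
    have hcp : IsContr (p.1 ⊗ₖ (1 : Matrix z z ℂ)) := by
      obtain ⟨hR, hR2, _, _, _⟩ := hL p (List.mem_cons_self)
      exact (isContr_of_unitary (by rw [hR.eq, hR2])).kron_one
    have hcs : IsContr ((1 : Matrix y y ℂ) ⊗ₖ prodS L) := by
      exact (isContr_of_unitary (prodS_unitary V s ε L
        fun q hq => hL q (List.mem_cons_of_mem p hq))).one_kron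
    have h1 := (norm_psi_mul_le s hs _ hcp _).trans
      (ih fun q hq => hL q (List.mem_cons_of_mem p hq))
    have h2 := (norm_psi_mul_le s hs _ hcs ((p.1 * V) ⊗ₖ (1 : Matrix z z ℂ) - V ⊗ₖ p.2)).trans
      (norm_psi_le_sqrt s (atomic1 V s ε hV hs htr (hL p (List.mem_cons_self))))
    calc ‖psi s ((p.1 ⊗ₖ (1 : Matrix z z ℂ)) * ((prodR L * V) ⊗ₖ (1 : Matrix z z ℂ) - V ⊗ₖ prodS L))
            + psi s (((1 : Matrix y y ℂ) ⊗ₖ prodS L) * ((p.1 * V) ⊗ₖ (1 : Matrix z z ℂ) - V ⊗ₖ p.2))‖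
        ≤ ‖psi s ((p.1 ⊗ₖ (1 : Matrix z z ℂ)) * ((prodR L * V) ⊗ₖ (1 : Matrix z z ℂ) - V ⊗ₖ prodS L))‖
            + ‖psi s (((1 : Matrix y y ℂ) ⊗ₖ prodS L) * ((p.1 * V) ⊗ₖ (1 : Matrix z z ℂ) - V ⊗ₖ p.2))‖ :=
          norm_add_le _ _
      _ ≤ L.length * Real.sqrt (2 * ε) + Real.sqrt (2 * ε) := add_le_add h1 h2
      _ ≤ (p :: L).length * Real.sqrt (2 * ε) := by
          rw [List.length_cons]
          push_cast
          ring_nf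
          linarith [Real.sqrt_nonneg (2 * ε)]

lemma lemC (hV : Vᴴ * V = 1) (hs : sᴴ = s) (htr : (s * s).trace = 1)
    (L : List (Matrix y y ℂ × Matrix z z ℂ)) (hL : ∀ p ∈ L, Good V s ε p) :
    ‖psi s (prodRh V L ⊗ₖ (1 : Matrix z z ℂ) - (1 : Matrix x x ℂ) ⊗ₖ prodS L)‖ ≤
      L.length * Real.sqrt (2 * ε) := by
  induction L with
  | nil =>
    have h0 : prodRh V ([] : List (Matrix y y ℂ × Matrix z z ℂ)) ⊗ₖ (1 : Matrix z z ℂ)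
        - (1 : Matrix x x ℂ) ⊗ₖ prodS ([] : List (Matrix y y ℂ × Matrix z z ℂ)) = 0 := by
      simp [prodRh, prodS]
    rw [h0, psi_zero]
    simp
  | cons p L ih =>
    have key : prodRh V (p :: L) ⊗ₖ (1 : Matrix z z ℂ) - (1 : Matrix x x ℂ) ⊗ₖ prodS (p :: L) =
        ((Vᴴ * p.1 * V) ⊗ₖ (1 : Matrix z z ℂ)) * (prodRh V L ⊗ₖ (1 : Matrix z z ℂ) - (1 : Matrix x x ℂ) ⊗ₖ prodS L)
          + ((1 : Matrix x x ℂ) ⊗ₖ prodS L) * ((Vᴴ * p.1 * V) ⊗ₖ (1 : Matrix z z ℂ) - (1 : Matrix x x ℂ) ⊗ₖ p.2) := by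
      rw [prodRh_cons, prodS_cons, Matrix.mul_sub, Matrix.mul_sub,
        ← mul_kronecker_mul, ← mul_kronecker_mul, ← mul_kronecker_mul, ← mul_kronecker_mul]
      simp only [Matrix.one_mul, Matrix.mul_one, Matrix.mul_assoc]
      abel
    rw [key, psi_add]
    have hcp : IsContr ((Vᴴ * p.1 * V) ⊗ₖ (1 : Matrix z z ℂ)) := by
      obtain ⟨hR, hR2, _, _, _⟩ := hL p (List.mem_cons_self)
      exact (isContr_Rh V hV hR hR2).kron_one
    have hcs : IsContr ((1 : Matrix x x ℂ) ⊗ₖ prodS L) := by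
      exact (isContr_of_unitary (prodS_unitary V s ε L
        fun q hq => hL q (List.mem_cons_of_mem p hq))).one_kron
    have h1 := (norm_psi_mul_le s hs _ hcp _).trans
      (ih fun q hq => hL q (List.mem_cons_of_mem p hq))
    have h2 := (norm_psi_mul_le s hs _ hcs
        ((Vᴴ * p.1 * V) ⊗ₖ (1 : Matrix z z ℂ) - (1 : Matrix x x ℂ) ⊗ₖ p.2)).trans
      (norm_psi_le_sqrt s (atomic2 V s ε hV hs htr (hL p (List.mem_cons_self))))
    calc ‖psi s (((Vᴴ * p.1 * V) ⊗ₖ (1 : Matrix z z ℂ)) * (prodRh V L ⊗ₖ (1 : Matrix z z ℂ) - (1 : Matrix x x ℂ) ⊗ₖ prodS L))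
            + psi s (((1 : Matrix x x ℂ) ⊗ₖ prodS L) * ((Vᴴ * p.1 * V) ⊗ₖ (1 : Matrix z z ℂ) - (1 : Matrix x x ℂ) ⊗ₖ p.2))‖
        ≤ ‖psi s (((Vᴴ * p.1 * V) ⊗ₖ (1 : Matrix z z ℂ)) * (prodRh V L ⊗ₖ (1 : Matrix z z ℂ) - (1 : Matrix x x ℂ) ⊗ₖ prodS L))‖
            + ‖psi s (((1 : Matrix x x ℂ) ⊗ₖ prodS L) * ((Vᴴ * p.1 * V) ⊗ₖ (1 : Matrix z z ℂ) - (1 : Matrix x x ℂ) ⊗ₖ p.2))‖ :=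
          norm_add_le _ _
      _ ≤ L.length * Real.sqrt (2 * ε) + Real.sqrt (2 * ε) := add_le_add h1 h2
      _ ≤ (p :: L).length * Real.sqrt (2 * ε) := by
          rw [List.length_cons]
          push_cast
          ring_nf
          linarith [Real.sqrt_nonneg (2 * ε)]

lemma lemE (hV : Vᴴ * V = 1) (hs : sᴴ = s) (htr : (s * s).trace = 1) (hε : 0 ≤ ε)
    (L : List (Matrix y y ℂ × Matrix z z ℂ)) (hL : ∀ p ∈ L, Good V s ε p) :
    ((((1 - (prodRh V L)ᴴ * prodRh V L) ⊗ₖ (1 : Matrix z z ℂ)) * (s * s)).trace).re ≤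
      2 * (L.length : ℝ) ^ 3 * ε := by
  induction L with
  | nil =>
    have h0 : (1 : Matrix x x ℂ) - (prodRh V ([] : List (Matrix y y ℂ × Matrix z z ℂ)))ᴴ *
        prodRh V ([] : List (Matrix y y ℂ × Matrix z z ℂ)) = 0 := by
      simp [prodRh]
    rw [h0]
    simp
  | cons p L ih =>
    obtain ⟨hR, hR2, hS, hS2, hcons⟩ := hL p (List.mem_cons_self)
    have hLt : ∀ q ∈ L, Good V s ε q := fun q hq => hL q (List.mem_cons_of_mem p hq)
    set Rh : Matrix x x ℂ := Vᴴ * p.1 * V with hRhdef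
    set Y : Matrix x x ℂ := prodRh V L with hYdef
    have hRhh : Rhᴴ = Rh := hermRh V p.1 hR.eq
    -- decompose 1 - (Rh * Y)ᴴ (Rh * Y)
    have hdec : (1 : Matrix x x ℂ) - (Rh * Y)ᴴ * (Rh * Y) =
        Yᴴ * (1 - Rh * Rh) * Y + (1 - Yᴴ * Y) := by
      rw [conjTranspose_mul, hRhh]
      simp only [Matrix.mul_sub, Matrix.sub_mul, Matrix.mul_one, Matrix.one_mul,
        Matrix.mul_assoc]
      abel
    -- the PSD square root of 1 - Rh²
    have hcontr : ((1 : Matrix x x ℂ) - Rh * Rh).PosSemidef := by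
      have h := isContr_Rh V hV hR hR2
      unfold IsContr at h
      rwa [hRhh] at h
    obtain ⟨B, hB⟩ := psd_decomp hcontr
    have hBY : Yᴴ * (1 - Rh * Rh) * Y = (B * Y)ᴴ * (B * Y) := by
      rw [hB, conjTranspose_mul]
      simp [Matrix.mul_assoc]
    -- trace splits
    have hsplit : ((((1 : Matrix x x ℂ) - (Rh * Y)ᴴ * (Rh * Y)) ⊗ₖ (1 : Matrix z z ℂ)) * (s * s)).trace.re =
        ((((B * Y)ᴴ * (B * Y)) ⊗ₖ (1 : Matrix z z ℂ)) * (s * s)).trace.re +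
          ((((1 : Matrix x x ℂ) - Yᴴ * Y) ⊗ₖ (1 : Matrix z z ℂ)) * (s * s)).trace.re := by
      rw [hdec, hBY, add_kronecker, Matrix.add_mul, Matrix.trace_add]
      simp [Complex.add_re]
    -- first term is ‖ψ((B*Y)⊗1)‖²
    have hnorm : ((((B * Y)ᴴ * (B * Y)) ⊗ₖ (1 : Matrix z z ℂ)) * (s * s)).trace.re =
        ‖psi s ((B * Y) ⊗ₖ (1 : Matrix z z ℂ))‖ ^ 2 := by
      rw [norm_psi_sq s hs, kron_conjT, ← mul_kronecker_mul, conjTranspose_one, Matrix.one_mul]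
    -- bound ‖ψ((B*Y)⊗1)‖
    have hsplit2 : (B * Y) ⊗ₖ (1 : Matrix z z ℂ) =
        (B ⊗ₖ (1 : Matrix z z ℂ)) * ((1 : Matrix x x ℂ) ⊗ₖ prodS L)
          + (B ⊗ₖ (1 : Matrix z z ℂ)) * (Y ⊗ₖ (1 : Matrix z z ℂ) - (1 : Matrix x x ℂ) ⊗ₖ prodS L) := by
      rw [Matrix.mul_sub]
      simp only [← mul_kronecker_mul, Matrix.one_mul, Matrix.mul_one]
      abel
    have hBcontr : IsContr B := by
      apply isContr_of_eq Rh
      rw [hRhh, ← hB, sub_sub_cancel]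
    have hB1 : ‖psi s (B ⊗ₖ (1 : Matrix z z ℂ))‖ ^ 2 ≤ 2 * ε := by
      rw [norm_psi_sq s hs, kron_conjT, ← mul_kronecker_mul, conjTranspose_one, Matrix.one_mul,
        ← hB]
      exact atomicB V s ε hV hs htr (hL p (List.mem_cons_self))
    have hcomm1 : (B ⊗ₖ (1 : Matrix z z ℂ)) * ((1 : Matrix x x ℂ) ⊗ₖ prodS L) =
        ((1 : Matrix x x ℂ) ⊗ₖ prodS L) * (B ⊗ₖ (1 : Matrix z z ℂ)) := by
      rw [← mul_kronecker_mul, ← mul_kronecker_mul]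
      simp only [Matrix.one_mul, Matrix.mul_one]
    have hScontr : IsContr ((1 : Matrix x x ℂ) ⊗ₖ prodS L) :=
      (isContr_of_unitary (prodS_unitary V s ε L hLt)).one_kron
    have hterm1 : ‖psi s ((B ⊗ₖ (1 : Matrix z z ℂ)) * ((1 : Matrix x x ℂ) ⊗ₖ prodS L))‖ ≤
        Real.sqrt (2 * ε) := by
      rw [hcomm1]
      exact (norm_psi_mul_le s hs _ hScontr _).trans (norm_psi_le_sqrt s hB1)
    have hterm2 : ‖psi s ((B ⊗ₖ (1 : Matrix z z ℂ)) *
        (Y ⊗ₖ (1 : Matrix z z ℂ) - (1 : Matrix x x ℂ) ⊗ₖ prodS L))‖ ≤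
          L.length * Real.sqrt (2 * ε) :=
      (norm_psi_mul_le s hs _ hBcontr.kron_one _).trans (lemC V s ε hV hs htr L hLt)
    have hBYnorm : ‖psi s ((B * Y) ⊗ₖ (1 : Matrix z z ℂ))‖ ≤
        (L.length + 1 : ℝ) * Real.sqrt (2 * ε) := by
      rw [hsplit2, psi_add]
      calc _ ≤ ‖psi s ((B ⊗ₖ (1 : Matrix z z ℂ)) * ((1 : Matrix x x ℂ) ⊗ₖ prodS L))‖ +
            ‖psi s ((B ⊗ₖ (1 : Matrix z z ℂ)) *
              (Y ⊗ₖ (1 : Matrix z z ℂ) - (1 : Matrix x x ℂ) ⊗ₖ prodS L))‖ := norm_add_le _ _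
        _ ≤ Real.sqrt (2 * ε) + L.length * Real.sqrt (2 * ε) := add_le_add hterm1 hterm2
        _ = (L.length + 1 : ℝ) * Real.sqrt (2 * ε) := by ring
    have hsq : ‖psi s ((B * Y) ⊗ₖ (1 : Matrix z z ℂ))‖ ^ 2 ≤
        ((L.length + 1 : ℝ)) ^ 2 * (2 * ε) := by
      have h1 := pow_le_pow_left₀ (norm_nonneg _) hBYnorm 2
      have h2 : ((L.length + 1 : ℝ) * Real.sqrt (2 * ε)) ^ 2 =
          ((L.length + 1 : ℝ)) ^ 2 * (2 * ε) := by
        rw [mul_pow, Real.sq_sqrt (by linarith)]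
      linarith
    have hY : prodRh V (p :: L) = Rh * Y := prodRh_cons V p L
    rw [hY, hsplit, hnorm]
    have hIH := ih hLt
    rw [List.length_cons]
    push_cast
    nlinarith [Nat.cast_nonneg (α := ℝ) L.length, hε,
      mul_nonneg (Nat.cast_nonneg (α := ℝ) L.length) hε,
      mul_nonneg (mul_nonneg (Nat.cast_nonneg (α := ℝ) L.length)
        (Nat.cast_nonneg (α := ℝ) L.length)) hε]

lemma master (hV : Vᴴ * V = 1) (hs : sᴴ = s) (htr : (s * s).trace = 1) (hε : 0 ≤ ε)
    (L : List (Matrix y y ℂ × Matrix z z ℂ)) (hL : ∀ p ∈ L, Good V s ε p)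
    (hcomm : ∀ p ∈ L, ∀ q ∈ L, p.1 * q.1 = q.1 * p.1) :
    1 - ((L.length : ℝ) ^ 3 + 5 * (L.length : ℝ) ^ 2) * ε ≤
      ((((Vᴴ * prodR L * V * prodRh V L) ⊗ₖ (1 : Matrix z z ℂ)) * (s * s)).trace).re := by
  set W : Matrix y y ℂ := prodR L with hWdef
  set Y : Matrix x x ℂ := prodRh V L with hYdef
  set T : Matrix z z ℂ := prodS L with hTdef
  set X : Matrix x x ℂ := Vᴴ * W * V with hXdef
  set k : ℝ := (L.length : ℝ) with hkdef
  have hk0 : 0 ≤ k := Nat.cast_nonneg _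
  have hWh : Wᴴ = W := prodR_herm V s ε L hL hcomm
  have hWu : Wᴴ * W = 1 := prodR_unitary V s ε L hL
  have hXh : Xᴴ = X := hermRh V W hWh
  set u := psi s (X ⊗ₖ (1 : Matrix z z ℂ)) with hudef
  set v := psi s (Y ⊗ₖ (1 : Matrix z z ℂ)) with hvdef
  set w := psi s ((1 : Matrix x x ℂ) ⊗ₖ T) with hwdef
  -- the inner product is the target trace
  have hinner : (inner ℂ u v : ℂ) = (((X * Y) ⊗ₖ (1 : Matrix z z ℂ)) * (s * s)).trace := by
    rw [hudef, hvdef, inner_psi s hs, kron_conjT, hXh, conjTranspose_one,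
      ← mul_kronecker_mul, Matrix.one_mul]
  -- distance from u to w
  have hD := lemD V s ε hV hs htr L hL
  have huw : ‖u - w‖ ≤ k * Real.sqrt (2 * ε) := by
    have hid : X ⊗ₖ (1 : Matrix z z ℂ) - (1 : Matrix x x ℂ) ⊗ₖ T =
        (Vᴴ ⊗ₖ (1 : Matrix z z ℂ)) * ((W * V) ⊗ₖ (1 : Matrix z z ℂ) - V ⊗ₖ T) := by
      rw [Matrix.mul_sub, ← mul_kronecker_mul, ← mul_kronecker_mul]
      simp only [Matrix.one_mul]
      rw [← Matrix.mul_assoc Vᴴ W V, hV]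
    rw [hudef, hwdef, ← psi_sub, hid]
    exact (norm_psi_mul_le s hs _ ((isContr_Vh V hV).kron_one) _).trans hD
  -- distance from v to w
  have hvw : ‖v - w‖ ≤ k * Real.sqrt (2 * ε) := by
    rw [hvdef, hwdef, ← psi_sub]
    exact lemC V s ε hV hs htr L hL
  -- ‖u‖² ≥ 1 - 2 k² ε
  have hWVu : (W * V)ᴴ * (W * V) = 1 := by
    rw [conjTranspose_mul, Matrix.mul_assoc, ← Matrix.mul_assoc Wᴴ W V, hWu, Matrix.one_mul, hV]
  have hQV : (1 - V * Vᴴ) * V = 0 := by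
    rw [Matrix.sub_mul, Matrix.one_mul, Matrix.mul_assoc, hV, Matrix.mul_one, sub_self]
  have hXid : 1 - Xᴴ * X = ((1 - V * Vᴴ) * (W * V))ᴴ * ((1 - V * Vᴴ) * (W * V)) := by
    have hV' : ∀ M : Matrix x (x × z) ℂ, True := fun _ => trivial
    have hVm : ∀ (M : Matrix x x ℂ), Vᴴ * (V * M) = M := by
      intro M; rw [← Matrix.mul_assoc, hV, Matrix.one_mul]
    have hWm : ∀ (M : Matrix y x ℂ), Wᴴ * (W * M) = M := by
      intro M; rw [← Matrix.mul_assoc, hWu, Matrix.one_mul]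
    simp only [conjTranspose_mul, conjTranspose_sub, conjTranspose_one,
      conjTranspose_conjTranspose, Matrix.sub_mul, Matrix.mul_sub, Matrix.mul_one,
      Matrix.one_mul, Matrix.mul_assoc, hXdef]
    simp only [hVm, hWm, hV]
    abel
  have hu2 : 1 - 2 * k ^ 2 * ε ≤ ‖u‖ ^ 2 := by
    have hnorm : ‖psi s (((1 - V * Vᴴ) * (W * V)) ⊗ₖ (1 : Matrix z z ℂ))‖ ^ 2 =
        ((((1 - Xᴴ * X) ⊗ₖ (1 : Matrix z z ℂ)) * (s * s)).trace).re := by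
      rw [norm_psi_sq s hs, kron_conjT, ← mul_kronecker_mul, conjTranspose_one,
        Matrix.one_mul, ← hXid]
    have hsplit : ((1 - V * Vᴴ) * (W * V)) ⊗ₖ (1 : Matrix z z ℂ) =
        ((1 - V * Vᴴ) ⊗ₖ (1 : Matrix z z ℂ)) * ((W * V) ⊗ₖ (1 : Matrix z z ℂ) - V ⊗ₖ T) := by
      rw [Matrix.mul_sub]
      simp only [← mul_kronecker_mul, Matrix.one_mul, Matrix.mul_one]
      rw [hQV, Matrix.zero_kronecker, sub_zero]
    have hle : ‖psi s (((1 - V * Vᴴ) * (W * V)) ⊗ₖ (1 : Matrix z z ℂ))‖ ≤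
        k * Real.sqrt (2 * ε) := by
      rw [hsplit]
      exact (norm_psi_mul_le s hs _ ((isContr_Q V hV).kron_one) _).trans hD
    have hsq : ‖psi s (((1 - V * Vᴴ) * (W * V)) ⊗ₖ (1 : Matrix z z ℂ))‖ ^ 2 ≤ 2 * k ^ 2 * ε := by
      have h1 := pow_le_pow_left₀ (norm_nonneg _) hle 2
      have h2 : (k * Real.sqrt (2 * ε)) ^ 2 = k ^ 2 * (2 * ε) := by
        rw [mul_pow, Real.sq_sqrt (by linarith)]
      nlinarith
    have hu2' : ‖u‖ ^ 2 = (((Xᴴ * X) ⊗ₖ (1 : Matrix z z ℂ)) * (s * s)).trace.re := by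
      rw [hudef, norm_psi_sq s hs, kron_conjT, ← mul_kronecker_mul, conjTranspose_one,
        Matrix.one_mul]
    rw [hnorm, trace_kron_sub_one s htr] at hsq
    rw [hu2']
    linarith
  -- ‖v‖² ≥ 1 - 2 k³ ε
  have hv2 : 1 - 2 * k ^ 3 * ε ≤ ‖v‖ ^ 2 := by
    have hE := lemE V s ε hV hs htr hε L hL
    have hv2' : ‖v‖ ^ 2 = (((Yᴴ * Y) ⊗ₖ (1 : Matrix z z ℂ)) * (s * s)).trace.re := by
      rw [hvdef, norm_psi_sq s hs, kron_conjT, ← mul_kronecker_mul, conjTranspose_one,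
        Matrix.one_mul]
    rw [trace_kron_sub_one s htr] at hE
    rw [hv2']
    linarith
  -- ‖u - v‖² ≤ 8 k² ε
  have huv : ‖u - v‖ ≤ 2 * k * Real.sqrt (2 * ε) := by
    have : u - v = (u - w) + (w - v) := by abel
    rw [this]
    calc ‖(u - w) + (w - v)‖ ≤ ‖u - w‖ + ‖w - v‖ := norm_add_le _ _
      _ ≤ k * Real.sqrt (2 * ε) + k * Real.sqrt (2 * ε) := by
          rw [norm_sub_rev w v]; exact add_le_add huw hvw
      _ = 2 * k * Real.sqrt (2 * ε) := by ring
  have huv2 : ‖u - v‖ ^ 2 ≤ 8 * k ^ 2 * ε := by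
    have h1 := pow_le_pow_left₀ (norm_nonneg _) huv 2
    have h2 : (2 * k * Real.sqrt (2 * ε)) ^ 2 = 4 * k ^ 2 * (2 * ε) := by
      rw [mul_pow, mul_pow, Real.sq_sqrt (by linarith)]
      ring
    nlinarith
  -- put it together
  have hpoly := norm_sub_sq (𝕜 := ℂ) u v
  have hre : RCLike.re (inner ℂ u v : ℂ) =
      ((((Vᴴ * W * V * Y) ⊗ₖ (1 : Matrix z z ℂ)) * (s * s)).trace).re := by
    rw [hinner]; rfl
  rw [hre] at hpoly
  linarith

end Main

end PPC


/-- If pairwise commuting reflections `Rᵢ` on `Y` are pulled back through an isometry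
`V : X → Y` to `Řᵢ = Vᴴ Rᵢ V`, and each `Řᵢ` has an ε-consistent reflection on `Z`
with respect to `ρ`, then `Re Tr([Vᴴ(∏ᵢ Rᵢ)V · ∏ᵢ Řᵢ]ρ) ≥ 1 − O(ε)`, with a constant
depending only on `k`. -/
theorem pullback_product_consistency (k : ℕ) :
    ∃ C : ℝ, 0 < C ∧
      ∀ (ny nx nz : ℕ) (R : Fin k → Matrix (Fin ny) (Fin ny) ℂ)
        (V : Matrix (Fin ny) (Fin nx) ℂ)
        (ρ : Matrix (Fin nx × Fin nz) (Fin nx × Fin nz) ℂ)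
        (S : Fin k → Matrix (Fin nz) (Fin nz) ℂ) (ε : ℝ),
        (∀ i, (R i).IsHermitian) → (∀ i, R i * R i = 1) →
        (∀ i j, R i * R j = R j * R i) →
        Vᴴ * V = 1 →
        ρ.PosSemidef → ρ.trace = 1 → 0 ≤ ε →
        (∀ i, (S i).IsHermitian) → (∀ i, S i * S i = 1) →
        (∀ i, 1 - ε ≤ ((((Vᴴ * R i * V) ⊗ₖ S i) * ρ).trace).re) →
        1 - C * ε ≤
          ((((Vᴴ * (List.ofFn R).prod * V *
              (List.ofFn fun i => Vᴴ * R i * V).prod) ⊗ₖ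
            (1 : Matrix (Fin nz) (Fin nz) ℂ)) * ρ).trace).re := by
  refine ⟨(k : ℝ) ^ 3 + 5 * (k : ℝ) ^ 2 + 1, by positivity, ?_⟩
  intro ny nx nz R V ρ S ε hRH hR2 hRcomm hV hρ hρtr hε hSH hS2 hcons
  classical
  obtain ⟨s, hs, hss⟩ := PPC.psd_sqrt ρ hρ
  have htr : (s * s).trace = 1 := by rw [hss, hρtr]
  set L : List (Matrix (Fin ny) (Fin ny) ℂ × Matrix (Fin nz) (Fin nz) ℂ) :=
    List.ofFn (fun i => (R i, S i)) with hLdef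
  have hL : ∀ p ∈ L, PPC.Good V s ε p := by
    intro p hp
    rw [hLdef, List.mem_ofFn] at hp
    obtain ⟨i, rfl⟩ := hp
    refine ⟨hRH i, hR2 i, hSH i, hS2 i, ?_⟩
    rw [hss]
    exact hcons i
  have hcomm : ∀ p ∈ L, ∀ q ∈ L, p.1 * q.1 = q.1 * p.1 := by
    intro p hp q hq
    rw [hLdef, List.mem_ofFn] at hp hq
    obtain ⟨i, rfl⟩ := hp
    obtain ⟨j, rfl⟩ := hq
    exact hRcomm i j
  have hmaster := PPC.master V s ε hV hs htr hε L hL hcomm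
  have e1 : PPC.prodR L = (List.ofFn R).prod := by
    rw [PPC.prodR, hLdef, List.map_ofFn]
    rfl
  have e2 : PPC.prodRh V L = (List.ofFn fun i => Vᴴ * R i * V).prod := by
    rw [PPC.prodRh, hLdef, List.map_ofFn]
    rfl
  have hlen : L.length = k := by rw [hLdef, List.length_ofFn]
  rw [e1, e2, hss, hlen] at hmaster
  have hCε : ((k : ℝ) ^ 3 + 5 * (k : ℝ) ^ 2) * ε ≤ ((k : ℝ) ^ 3 + 5 * (k : ℝ) ^ 2 + 1) * ε := by
    nlinarith
  linarith
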